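/- Zvol is additive under almost disjoint union: if X ∈ Z_n(A), Y ∈ Z_n(B) are integral n-cycles with |A ∩ B| ≤ n + 1, then Zvol(X + Y) = Zvol(X) + Zvol(Y). -/

import Mathlib

/-- Oriented `n`-simplices on vertex set `ℕ`, represented by their vertex sets
(of size `n+1`), with the orientation given by increasing order. -/
abbrev Simp (n : ℕ) : Type := {s : Finset ℕ // s.card = n + 1}

/-- Simplicial `n`-chains with coefficients in `R`. -/
abbrev GChain (R : Type) [CommRing R] (n : ℕ) : Type := Simp n →₀ R

/-- Integral simplicial `n`-chains. -/
abbrev ZChain (n : ℕ) : Type := GChain ℤ n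

/-- Boundary of a single oriented `(n+1)`-simplex. -/
noncomputable def simpBdry (R : Type) [CommRing R] {n : ℕ} (s : Simp (n + 1)) :
    GChain R n :=
  ∑ v ∈ (s : Finset ℕ).attach,
    ((-1 : R) ^ (((s : Finset ℕ).filter (· < (v : ℕ))).card)) •
      Finsupp.single
        ⟨(s : Finset ℕ).erase (v : ℕ), by
          have hv := v.2
          simp [Finset.card_erase_of_mem hv, s.2]⟩ 1

/-- The simplicial boundary operator. -/
noncomputable def bdry {R : Type} [CommRing R] {n : ℕ} (M : GChain R (n + 1)) :
    GChain R n :=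
  M.sum fun s c => c • simpBdry R s

/-- The `L¹`-norm of an integral chain. -/
noncomputable def znorm {n : ℕ} (M : ZChain n) : ℕ :=
  M.sum fun _ c => c.natAbs

/-- The set of vertices of simplices with nonzero coefficient. -/
noncomputable def vert {R : Type} [CommRing R] {n : ℕ} (M : GChain R n) : Finset ℕ :=
  M.support.sup fun s => (s : Finset ℕ)

/-- The chain is supported on simplices with vertices in `A`. -/
def suppOn {R : Type} [CommRing R] {n : ℕ} (A : Finset ℕ) (M : GChain R n) : Prop :=
  ∀ s ∈ M.support, (s : Finset ℕ) ⊆ A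

/-- Total multiplicity in `M` of simplices containing the vertex `x`. -/
noncomputable def zdeg {n : ℕ} (x : ℕ) (M : ZChain n) : ℕ :=
  M.sum fun s c => if x ∈ (s : Finset ℕ) then c.natAbs else 0

/-- Maximum vertex degree of an integral chain. -/
noncomputable def zmaxdeg {n : ℕ} (M : ZChain n) : ℕ :=
  (vert M).sup fun x => zdeg x M

/-- The cone from the vertex `x` over the chain `U`: each oriented simplex of `U`
gets `x` adjoined as a new first vertex; simplices already containing `x`
contribute `0`. -/
noncomputable def cone {n : ℕ} (x : ℕ) (U : ZChain n) : ZChain (n + 1) :=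
  U.sum fun s c =>
    if h : x ∈ (s : Finset ℕ) then 0
    else
      (((-1 : ℤ) ^ (((s : Finset ℕ).filter (· < x)).card)) * c) •
        Finsupp.single ⟨insert x (s : Finset ℕ), by
          simp [Finset.card_insert_of_notMem h, s.2]⟩ 1

/-- `Zvol X`: the minimal `L¹`-norm of an integral filling of `X`. -/
noncomputable def zvol {n : ℕ} (X : ZChain n) : ℕ :=
  sInf {m : ℕ | ∃ M : ZChain (n + 1), bdry M = X ∧ znorm M = m}

/-- A chain is taut if it is an optimal filling of its boundary. -/
def Taut {n : ℕ} (M : ZChain (n + 1)) : Prop :=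
  znorm M = zvol (bdry M)

open scoped Classical

noncomputable section

/-- single on a raw finset, or 0 if the cardinality is wrong. -/
def sgl (n : ℕ) (t : Finset ℕ) (c : ℤ) : ZChain n :=
  if h : t.card = n + 1 then Finsupp.single ⟨t, h⟩ c else 0

/-- linear extension of a map on simplices. -/
def linHom {n m : ℕ} (F : Simp n → ZChain m) : ZChain n →+ ZChain m :=
  Finsupp.liftAddHom fun s =>
    { toFun := fun c => c • F s
      map_zero' := by simp
      map_add' := fun a b => by simp [add_smul] }

lemma linHom_single {n m : ℕ} (F : Simp n → ZChain m) (s : Simp n) (c : ℤ) :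
    linHom F (Finsupp.single s c) = c • F s := by
  simp [linHom]

lemma bdry_eq_linHom {n : ℕ} (M : ZChain (n+1)) :
    bdry M = linHom (simpBdry ℤ) M := rfl

lemma bdry_single {n : ℕ} (s : Simp (n+1)) (c : ℤ) :
    bdry (Finsupp.single s c) = c • simpBdry ℤ s := by
  rw [bdry_eq_linHom, linHom_single]

def psign (f : ℕ → ℕ) (x y : ℕ) : ℤ := if (x < y ↔ f x < f y) then 1 else -1

def eps (f : ℕ → ℕ) (s : Finset ℕ) : ℤ :=
  ∏ x ∈ s, ∏ y ∈ s, if x < y then psign f x y else 1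

def sigma' (f : ℕ → ℕ) (u v : ℕ) : ℤ :=
  if u < v then psign f u v else if v < u then psign f v u else 1

lemma eps_insert (f : ℕ → ℕ) {v : ℕ} {t : Finset ℕ} (hv : v ∉ t) :
    eps f (insert v t) = eps f t * ∏ u ∈ t, sigma' f u v := by
  unfold eps
  rw [Finset.prod_insert hv]
  have h1 : ∏ y ∈ insert v t, (if v < y then psign f v y else 1)
      = ∏ y ∈ t, (if v < y then psign f v y else 1) := by
    rw [Finset.prod_insert hv, if_neg (lt_irrefl v), one_mul]
  have h2 : ∀ x ∈ t, ∏ y ∈ insert v t, (if x < y then psign f x y else 1)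
      = (if x < v then psign f x v else 1) * ∏ y ∈ t, (if x < y then psign f x y else 1) := by
    intro x hx
    rw [Finset.prod_insert hv]
  rw [h1, Finset.prod_congr rfl h2, Finset.prod_mul_distrib]
  have key : (∏ y ∈ t, if v < y then psign f v y else 1) *
      ∏ x ∈ t, (if x < v then psign f x v else 1) = ∏ u ∈ t, sigma' f u v := by
    rw [← Finset.prod_mul_distrib]
    apply Finset.prod_congr rfl
    intro u hu
    have huv : u ≠ v := fun h => hv (h ▸ hu)
    rcases lt_trichotomy u v with h | h | h
    · simp [sigma', h, not_lt.2 h.le]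
    · exact absurd h huv
    · simp [sigma', h, not_lt.2 h.le, not_lt.2 (le_of_lt h)]
  rw [← key]
  ring

lemma eps_id_on (f : ℕ → ℕ) (s : Finset ℕ) (h : ∀ x ∈ s, f x = x) : eps f s = 1 := by
  unfold eps
  apply Finset.prod_eq_one
  intro x hx
  apply Finset.prod_eq_one
  intro y hy
  split <;> simp [psign, h x hx, h y hy]

lemma eps_unit (f : ℕ → ℕ) (s : Finset ℕ) : eps f s = 1 ∨ eps f s = -1 := by
  unfold eps
  apply Finset.prod_induction _ (fun z => z = 1 ∨ z = -1)
  · rintro a b (ha | ha) (hb | hb) <;> simp [ha, hb]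
  · left; rfl
  · intro x _
    apply Finset.prod_induction _ (fun z => z = 1 ∨ z = -1)
    · rintro a b (ha | ha) (hb | hb) <;> simp [ha, hb]
    · left; rfl
    · intro y _
      unfold psign
      split_ifs <;> simp

lemma negone_pow_filter (s : Finset ℕ) (P : ℕ → Prop) [DecidablePred P] :
    ((-1 : ℤ) ^ (s.filter P).card) = ∏ x ∈ s, if P x then (-1 : ℤ) else 1 := by
  rw [Finset.prod_ite, Finset.prod_const, Finset.prod_const, one_pow, mul_one]

end
noncomputable section

def pushRaw (f : ℕ → ℕ) (n : ℕ) (t : Finset ℕ) : ZChain n :=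
  if Set.InjOn f t then eps f t • sgl n (t.image f) 1 else 0

def pushSimp (f : ℕ → ℕ) {n : ℕ} (s : Simp n) : ZChain n := pushRaw f n (s : Finset ℕ)

def push (f : ℕ → ℕ) {n : ℕ} : ZChain n →+ ZChain n := linHom (pushSimp f)

lemma simpBdry_expand {n : ℕ} (s : Simp (n+1)) :
    simpBdry ℤ s = ∑ v ∈ (s : Finset ℕ),
      ((-1:ℤ) ^ (((s : Finset ℕ).filter (· < v)).card)) • sgl n ((s : Finset ℕ).erase v) 1 := by
  rw [simpBdry,
    ← Finset.sum_attach (s : Finset ℕ) (fun v =>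
      ((-1:ℤ) ^ (((s : Finset ℕ).filter (· < v)).card)) • sgl n ((s : Finset ℕ).erase v) 1)]
  apply Finset.sum_congr rfl
  intro v _
  have hv : (((s : Finset ℕ).erase (v:ℕ)).card) = n + 1 := by
    simp [Finset.card_erase_of_mem v.2, s.2]
  rw [sgl, dif_pos hv]

lemma linHom_sgl {n m : ℕ} (F : Simp n → ZChain m) (t : Finset ℕ) (c : ℤ) (h : t.card = n+1) :
    linHom F (sgl n t c) = c • F ⟨t, h⟩ := by rw [sgl, dif_pos h, linHom_single]

lemma bdry_sgl {n : ℕ} (t : Finset ℕ) (c : ℤ) (h : t.card = n+1+1) :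
    bdry (sgl (n+1) t c) = c • simpBdry ℤ ⟨t, h⟩ := by
  rw [bdry_eq_linHom, linHom_sgl _ t c h]

lemma image_erase_of_injOn {f : ℕ → ℕ} {s : Finset ℕ} (h : Set.InjOn f s) {v : ℕ} (hv : v ∈ s) :
    (s.erase v).image f = (s.image f).erase (f v) := by
  ext w
  simp only [Finset.mem_image, Finset.mem_erase]
  constructor
  · rintro ⟨u, ⟨huv, hus⟩, rfl⟩
    exact ⟨fun he => huv (h hus hv he), u, hus, rfl⟩
  · rintro ⟨hw, u, hus, rfl⟩
    exact ⟨u, ⟨fun he => hw (by rw [he]), hus⟩, rfl⟩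

lemma image_erase_eq {f : ℕ → ℕ} {S : Finset ℕ} {a b : ℕ} (ha : a ∈ S) (hb : b ∈ S)
    (hab : a ≠ b) (hf : f a = f b) :
    (S.erase a).image f = (S.erase b).image f := by
  ext w
  simp only [Finset.mem_image, Finset.mem_erase]
  constructor
  · rintro ⟨u, ⟨hua, huS⟩, rfl⟩
    by_cases hub : u = b
    · exact ⟨a, ⟨hab, ha⟩, by rw [hf, ← hub]⟩
    · exact ⟨u, ⟨hub, huS⟩, rfl⟩
  · rintro ⟨u, ⟨hub, huS⟩, rfl⟩
    by_cases hua : u = a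
    · exact ⟨b, ⟨hab.symm, hb⟩, by rw [← hf, ← hua]⟩
    · exact ⟨u, ⟨hua, huS⟩, rfl⟩

lemma sign_elt1 {f : ℕ → ℕ} {u v : ℕ} (huv : u ≠ v) (hf : f u ≠ f v) :
    sigma' f u v * (if f u < f v then (-1:ℤ) else 1) = if u < v then -1 else 1 := by
  unfold sigma' psign
  split_ifs <;> first | rfl | omega

lemma sign_step (f : ℕ → ℕ) (t : Finset ℕ) (v : ℕ) (hvt : v ∉ t)
    (hinj : ∀ u ∈ t, f u ≠ f v) :
    eps f (insert v t) * ∏ u ∈ t, (if f u < f v then (-1:ℤ) else 1) =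
    (∏ u ∈ t, if u < v then (-1:ℤ) else 1) * eps f t := by
  rw [eps_insert f hvt]
  have key : (∏ u ∈ t, sigma' f u v) * ∏ u ∈ t, (if f u < f v then (-1:ℤ) else 1)
      = ∏ u ∈ t, if u < v then (-1:ℤ) else 1 := by
    rw [← Finset.prod_mul_distrib]
    apply Finset.prod_congr rfl
    intro u hu
    exact sign_elt1 (fun h => hvt (h ▸ hu)) (hinj u hu)
  rw [← key]
  ring

lemma sign_elt2 {f : ℕ → ℕ} {y a b : ℕ} (hya : y ≠ a) (hyb : y ≠ b) (hab : a < b)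
    (hfya : f y ≠ f a) (hfab : f a = f b) :
    (if y < a then (-1:ℤ) else 1) * sigma' f y b = (if y < b then (-1:ℤ) else 1) * sigma' f y a := by
  have hfyb : f y ≠ f b := hfab ▸ hfya
  unfold sigma' psign
  split_ifs <;> first | rfl | omega

end
noncomputable section

lemma bdry_zero {n : ℕ} : bdry (0 : ZChain (n+1)) = 0 := by
  rw [bdry_eq_linHom, map_zero]

lemma bdry_add {n : ℕ} (M N : ZChain (n+1)) : bdry (M + N) = bdry M + bdry N := by
  rw [bdry_eq_linHom, bdry_eq_linHom, bdry_eq_linHom, map_add]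

lemma bdry_zsmul {n : ℕ} (c : ℤ) (M : ZChain (n+1)) : bdry (c • M) = c • bdry M := by
  rw [bdry_eq_linHom, bdry_eq_linHom, map_zsmul]

lemma bdry_pushRaw {n : ℕ} (f : ℕ → ℕ) (S : Finset ℕ) (hS : S.card = n + 2) :
    bdry (pushRaw f (n+1) S) =
      ∑ v ∈ S, ((-1:ℤ) ^ ((S.filter (· < v)).card)) • pushRaw f n (S.erase v) := by
  by_cases hinj : Set.InjOn f ↑S
  · have himg : (S.image f).card = n + 1 + 1 := by
      rw [Finset.card_image_of_injOn hinj, hS]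
    rw [pushRaw, if_pos hinj, bdry_zsmul, bdry_sgl _ 1 himg, one_smul, simpBdry_expand]
    simp only [Finset.smul_sum]
    rw [Finset.sum_image (fun x hx y hy hxy => hinj hx hy hxy)]
    apply Finset.sum_congr rfl
    intro v hv
    have hvt : v ∉ S.erase v := Finset.notMem_erase v S
    have hSi : insert v (S.erase v) = S := Finset.insert_erase hv
    have hero : Set.InjOn f ↑(S.erase v) := hinj.mono (by
      intro x hx
      exact Finset.mem_coe.2 (Finset.mem_of_mem_erase (Finset.mem_coe.1 hx)))
    rw [pushRaw, if_pos hero, image_erase_of_injOn hinj hv, smul_smul, smul_smul]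
    congr 1
    have e1 : ((-1:ℤ) ^ (((S.image f).filter (· < f v)).card))
        = ∏ u ∈ S.erase v, (if f u < f v then (-1:ℤ) else 1) := by
      rw [negone_pow_filter, Finset.prod_image (fun x hx y hy hxy => hinj hx hy hxy),
        ← Finset.mul_prod_erase S _ hv, if_neg (lt_irrefl (f v)), one_mul]
    have e2 : ((-1:ℤ) ^ ((S.filter (· < v)).card))
        = ∏ u ∈ S.erase v, (if u < v then (-1:ℤ) else 1) := by
      rw [negone_pow_filter, ← Finset.mul_prod_erase S _ hv, if_neg (lt_irrefl v), one_mul]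
    have hne : ∀ u ∈ S.erase v, f u ≠ f v := by
      intro u hu he
      exact (Finset.mem_erase.1 hu).1 (hinj (Finset.mem_of_mem_erase hu) hv he)
    have := sign_step f (S.erase v) v hvt hne
    rw [hSi] at this
    rw [e1, e2, this]
  · rw [pushRaw, if_neg hinj, bdry_zero]
    symm
    by_cases hex : ∃ w ∈ S, Set.InjOn f ↑(S.erase w)
    · obtain ⟨w, hwS, hw⟩ := hex
      obtain ⟨x, hxS, y, hyS, hxy, hfxy⟩ : ∃ x ∈ S, ∃ y ∈ S, x ≠ y ∧ f x = f y := by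
        by_contra hc
        push_neg at hc
        apply hinj
        intro p hp q hq hpq
        by_contra hne
        exact hc p (Finset.mem_coe.1 hp) q (Finset.mem_coe.1 hq) hne hpq
      have hwxy : w = x ∨ w = y := by
        by_contra hc
        push_neg at hc
        exact hxy (hw (Finset.mem_coe.2 (Finset.mem_erase.2 ⟨fun h => hc.1 h.symm, hxS⟩))
          (Finset.mem_coe.2 (Finset.mem_erase.2 ⟨fun h => hc.2 h.symm, hyS⟩)) hfxy)
      obtain ⟨u, huS, huw, hfuw⟩ : ∃ u ∈ S, u ≠ w ∧ f u = f w := by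
        rcases hwxy with rfl | rfl
        · exact ⟨y, hyS, fun h => hxy h.symm, hfxy.symm⟩
        · exact ⟨x, hxS, hxy, hfxy⟩
      have hu' : Set.InjOn f ↑(S.erase u) := by
        intro p hp q hq hpq
        by_contra hne
        obtain ⟨hpu, hpS⟩ := Finset.mem_erase.1 (Finset.mem_coe.1 hp)
        obtain ⟨hqu, hqS⟩ := Finset.mem_erase.1 (Finset.mem_coe.1 hq)
        have hpq' : p = w ∨ q = w := by
          by_contra hc
          push_neg at hc
          exact hne (hw (Finset.mem_coe.2 (Finset.mem_erase.2 ⟨hc.1, hpS⟩))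
            (Finset.mem_coe.2 (Finset.mem_erase.2 ⟨hc.2, hqS⟩)) hpq)
        rcases hpq' with rfl | rfl
        · have hq2 : f q = f u := (hfuw.trans hpq).symm
          exact hqu (hw (Finset.mem_coe.2 (Finset.mem_erase.2 ⟨fun h => hne h.symm, hqS⟩))
            (Finset.mem_coe.2 (Finset.mem_erase.2 ⟨huw, huS⟩)) hq2)
        · have hp2 : f p = f u := hpq.trans hfuw.symm
          exact hpu (hw (Finset.mem_coe.2 (Finset.mem_erase.2 ⟨hne, hpS⟩))
            (Finset.mem_coe.2 (Finset.mem_erase.2 ⟨huw, huS⟩)) hp2)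
      obtain ⟨a, b, hab, haS, hbS, hfab, hainj, hbinj⟩ :
          ∃ a b : ℕ, a < b ∧ a ∈ S ∧ b ∈ S ∧ f a = f b ∧
            Set.InjOn f ↑(S.erase a) ∧ Set.InjOn f ↑(S.erase b) := by
        rcases lt_or_gt_of_ne huw with hlt | hlt
        · exact ⟨u, w, hlt, huS, hwS, hfuw, hu', hw⟩
        · exact ⟨w, u, hlt, hwS, huS, hfuw.symm, hw, hu'⟩
      have hzero : ∀ v ∈ S, v ∉ ({a, b} : Finset ℕ) →
          ((-1:ℤ) ^ ((S.filter (· < v)).card)) • pushRaw f n (S.erase v) = 0 := by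
        intro v hv hvab
        simp only [Finset.mem_insert, Finset.mem_singleton, not_or] at hvab
        rw [pushRaw, if_neg, smul_zero]
        intro hcinj
        exact hab.ne (hcinj (Finset.mem_coe.2 (Finset.mem_erase.2 ⟨fun h => hvab.1 h.symm, haS⟩))
          (Finset.mem_coe.2 (Finset.mem_erase.2 ⟨fun h => hvab.2 h.symm, hbS⟩)) hfab)
      have hsub : ({a, b} : Finset ℕ) ⊆ S := by
        intro z hz
        simp only [Finset.mem_insert, Finset.mem_singleton] at hz
        rcases hz with rfl | rfl <;> assumption
      rw [← Finset.sum_subset hsub (fun x hx hnx => hzero x hx hnx),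
        Finset.sum_pair hab.ne]
      -- now compute the two remaining terms
      have hbea : b ∈ S.erase a := Finset.mem_erase.2 ⟨hab.ne', hbS⟩
      have haeb : a ∈ S.erase b := Finset.mem_erase.2 ⟨hab.ne, haS⟩
      set t : Finset ℕ := (S.erase a).erase b with htdef
      have hbt : b ∉ t := Finset.notMem_erase b _
      have hat : a ∉ t := fun hc => (Finset.notMem_erase a S) (Finset.mem_of_mem_erase hc)
      have hSa : S.erase a = insert b t := (Finset.insert_erase hbea).symm
      have hSb : S.erase b = insert a t := by
        rw [htdef, Finset.erase_right_comm]
        exact (Finset.insert_erase haeb).symm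
      have hIm : (S.erase a).image f = (S.erase b).image f :=
        image_erase_eq haS hbS hab.ne hfab
      rw [pushRaw, if_pos hainj, pushRaw, if_pos hbinj, ← hIm]
      rw [smul_smul, smul_smul, ← add_smul]
      convert zero_smul ℤ _
      -- scalar identity
      have eA : ((-1:ℤ) ^ ((S.filter (· < a)).card))
          = ∏ y ∈ t, (if y < a then (-1:ℤ) else 1) := by
        rw [negone_pow_filter, ← Finset.mul_prod_erase S _ haS, if_neg (lt_irrefl a),
          one_mul, ← Finset.mul_prod_erase (S.erase a) _ hbea, if_neg (not_lt.2 hab.le), one_mul]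
      have eB : ((-1:ℤ) ^ ((S.filter (· < b)).card))
          = -∏ y ∈ t, (if y < b then (-1:ℤ) else 1) := by
        rw [negone_pow_filter, ← Finset.mul_prod_erase S _ hbS, if_neg (lt_irrefl b),
          one_mul, ← Finset.mul_prod_erase (S.erase b) _ haeb, if_pos hab]
        rw [htdef, Finset.erase_right_comm]
        ring
      have epsA : eps f (S.erase a) = eps f t * ∏ y ∈ t, sigma' f y b := by
        rw [hSa, eps_insert f hbt]
      have epsB : eps f (S.erase b) = eps f t * ∏ y ∈ t, sigma' f y a := by
        rw [hSb, eps_insert f hat]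
      have key : ∏ y ∈ t, ((if y < a then (-1:ℤ) else 1) * sigma' f y b)
          = ∏ y ∈ t, ((if y < b then (-1:ℤ) else 1) * sigma' f y a) := by
        apply Finset.prod_congr rfl
        intro y hy
        have hyb2 : y ≠ b := fun h => hbt (h ▸ hy)
        have hya : y ≠ a := fun h => hat (h ▸ hy)
        have hyS : y ∈ S := Finset.mem_of_mem_erase (Finset.mem_of_mem_erase hy)
        have hfya : f y ≠ f a := by
          intro hc
          exact hya (hbinj (Finset.mem_coe.2 (Finset.mem_erase.2 ⟨hyb2, hyS⟩))
            (Finset.mem_coe.2 haeb) hc)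
        exact sign_elt2 hya hyb2 hab hfya hfab
      rw [Finset.prod_mul_distrib, Finset.prod_mul_distrib] at key
      rw [eA, eB, epsA, epsB]
      linear_combination (eps f t) * key
    · apply Finset.sum_eq_zero
      intro v hv
      rw [pushRaw, if_neg (fun hc => hex ⟨v, hv, hc⟩), smul_zero]

end
noncomputable section

lemma push_simpBdry {n : ℕ} (f : ℕ → ℕ) (s : Simp (n+1)) :
    push f (simpBdry ℤ s) = ∑ v ∈ (s : Finset ℕ),
      ((-1:ℤ) ^ (((s:Finset ℕ).filter (· < v)).card)) • pushRaw f n ((s:Finset ℕ).erase v) := by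
  rw [simpBdry_expand, map_sum]
  apply Finset.sum_congr rfl
  intro v hv
  rw [map_zsmul]
  congr 1
  have hcard : ((s:Finset ℕ).erase v).card = n+1 := by
    simp [Finset.card_erase_of_mem hv, s.2]
  exact (linHom_sgl (pushSimp f) _ 1 hcard).trans (one_smul _ _)

lemma bdry_push {n : ℕ} (f : ℕ → ℕ) (M : ZChain (n+1)) :
    bdry (push f M) = push f (bdry M) := by
  induction M using Finsupp.induction with
  | zero => simp only [map_zero, bdry_zero]
  | single_add s c M _ _ ih =>
    rw [map_add, bdry_add, bdry_add, map_add, ih]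
    congr 1
    calc bdry (push f (Finsupp.single s c)) = bdry (c • pushSimp f s) := by
          rw [push, linHom_single]
      _ = c • bdry (pushRaw f (n+1) (s : Finset ℕ)) := bdry_zsmul c _
      _ = c • push f (simpBdry ℤ s) := by rw [bdry_pushRaw f _ s.2, push_simpBdry]
      _ = push f (c • simpBdry ℤ s) := (map_zsmul (push f) c _).symm
      _ = push f (bdry (Finsupp.single s c)) := by rw [bdry_single]

def coneRaw (x : ℕ) (n : ℕ) (t : Finset ℕ) : ZChain (n+1) :=
  if x ∈ t then 0 else ((-1:ℤ)^((t.filter (· < x)).card)) • sgl (n+1) (insert x t) 1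

lemma cone_eq_linHom {n : ℕ} (x : ℕ) (U : ZChain n) :
    cone x U = linHom (fun s => coneRaw x n (s : Finset ℕ)) U := by
  apply Finsupp.sum_congr
  intro s _
  by_cases hx : x ∈ (s : Finset ℕ)
  · have hc : coneRaw x n (s : Finset ℕ) = 0 := by unfold coneRaw; rw [if_pos hx]
    show _ = U s • coneRaw x n (s : Finset ℕ)
    rw [dif_pos hx, hc, smul_zero]
  · have hcard : (insert x (s:Finset ℕ)).card = n + 1 + 1 := by
      simp [Finset.card_insert_of_notMem hx, s.2]
    have hc : coneRaw x n (s : Finset ℕ)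
        = ((-1:ℤ)^(((s:Finset ℕ).filter (· < x)).card)) • sgl (n+1) (insert x (s:Finset ℕ)) 1 := by
      unfold coneRaw; rw [if_neg hx]
    show _ = U s • coneRaw x n (s : Finset ℕ)
    rw [dif_neg hx, hc, sgl, dif_pos hcard, smul_smul, mul_comm]

lemma cone_single {n : ℕ} (x : ℕ) (s : Simp n) (c : ℤ) :
    cone x (Finsupp.single s c) = c • coneRaw x n (s : Finset ℕ) := by
  rw [cone_eq_linHom, linHom_single]

lemma cone_zero {n : ℕ} (x : ℕ) : cone x (0 : ZChain n) = 0 := by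
  rw [cone_eq_linHom, map_zero]

lemma cone_add {n : ℕ} (x : ℕ) (U V : ZChain n) :
    cone x (U + V) = cone x U + cone x V := by
  rw [cone_eq_linHom, cone_eq_linHom, cone_eq_linHom, map_add]

lemma cone_zsmul {n : ℕ} (x : ℕ) (c : ℤ) (U : ZChain n) :
    cone x (c • U) = c • cone x U := by
  rw [cone_eq_linHom, cone_eq_linHom, map_zsmul]

lemma bdry_coneRaw {n : ℕ} (x : ℕ) (S : Finset ℕ) (hS : S.card = n + 2) :
    bdry (coneRaw x (n+1) S) = sgl (n+1) S 1 -
      ∑ v ∈ S, ((-1:ℤ)^((S.filter (· < v)).card)) • coneRaw x n (S.erase v) := by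
  by_cases hx : x ∈ S
  · rw [coneRaw, if_pos hx, bdry_zero]
    rw [Finset.sum_eq_single_of_mem x hx]
    · unfold coneRaw
      rw [if_neg (Finset.notMem_erase x S), Finset.insert_erase hx, smul_smul]
      have hfil : ((S.erase x).filter (· < x)).card = (S.filter (· < x)).card := by
        rw [Finset.filter_erase, Finset.erase_eq_of_notMem]
        simp [Finset.mem_filter]
      rw [hfil, ← pow_add]
      have : Even ((S.filter (· < x)).card + (S.filter (· < x)).card) := ⟨_, rfl⟩
      rw [this.neg_one_pow]
      rw [one_smul, sub_self]
    · intro v hv hvx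
      unfold coneRaw
      rw [if_pos (Finset.mem_erase.2 ⟨fun h => hvx h.symm, hx⟩), smul_zero]
  · have hins : (insert x S).card = n + 1 + 1 + 1 := by
      simp [Finset.card_insert_of_notMem hx, hS]
    unfold coneRaw
    rw [if_neg hx, bdry_zsmul, bdry_sgl _ 1 hins, one_smul, simpBdry_expand]
    show ((-1:ℤ)^((S.filter (· < x)).card)) • ∑ v ∈ insert x S,
        ((-1:ℤ) ^ (((insert x S).filter (· < v)).card)) • sgl (n+1) ((insert x S).erase v) 1 = _
    rw [Finset.sum_insert hx, smul_add]
    have hEx : ((insert x S).filter (· < x)) = S.filter (· < x) := by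
      rw [Finset.filter_insert, if_neg (lt_irrefl x)]
    have hfirst : ((-1:ℤ)^((S.filter (· < x)).card)) •
        (((-1:ℤ) ^ (((insert x S).filter (· < x)).card)) • sgl (n+1) ((insert x S).erase x) 1)
        = sgl (n+1) S 1 := by
      rw [hEx, Finset.erase_insert hx, smul_smul, ← pow_add]
      have hev : Even ((S.filter (· < x)).card + (S.filter (· < x)).card) := ⟨_, rfl⟩
      rw [hev.neg_one_pow, one_smul]
    rw [hfirst, sub_eq_add_neg]
    congr 1
    rw [Finset.smul_sum, ← Finset.sum_neg_distrib]
    apply Finset.sum_congr rfl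
    intro v hv
    have hxv : x ≠ v := fun h => hx (h ▸ hv)
    have hxe : x ∉ S.erase v := fun h => hx (Finset.mem_of_mem_erase h)
    rw [if_neg hxe, Finset.erase_insert_of_ne hxv, smul_smul, smul_smul, ← neg_smul]
    congr 1
    rw [negone_pow_filter (insert x S) (· < v), Finset.prod_insert hx,
      negone_pow_filter S (· < x), ← Finset.mul_prod_erase S (fun u => if u < x then (-1:ℤ) else 1) hv,
      negone_pow_filter S (· < v), negone_pow_filter (S.erase v) (· < x)]
    rcases lt_or_gt_of_ne hxv with hlt | hlt
    · rw [if_pos hlt, if_neg (asymm hlt)]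
      ring
    · rw [if_neg (asymm hlt), if_pos hlt]
      ring

end
noncomputable section

lemma cone_simpBdry {n : ℕ} (x : ℕ) (s : Simp (n+1)) :
    cone x (simpBdry ℤ s) = ∑ v ∈ (s : Finset ℕ),
      ((-1:ℤ) ^ (((s:Finset ℕ).filter (· < v)).card)) • coneRaw x n ((s:Finset ℕ).erase v) := by
  rw [simpBdry_expand, cone_eq_linHom, map_sum]
  apply Finset.sum_congr rfl
  intro v hv
  rw [map_zsmul]
  congr 1
  have hcard : ((s:Finset ℕ).erase v).card = n+1 := by
    simp [Finset.card_erase_of_mem hv, s.2]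
  exact (linHom_sgl _ _ 1 hcard).trans (one_smul _ _)

lemma bdry_cone {n : ℕ} (x : ℕ) (U : ZChain (n+1)) :
    bdry (cone x U) = U - cone x (bdry U) := by
  induction U using Finsupp.induction with
  | zero => rw [cone_zero, bdry_zero, bdry_zero, cone_zero, sub_zero]
  | single_add s c M _ _ ih =>
    have hsingle : bdry (cone x (Finsupp.single s c))
        = Finsupp.single s c - cone x (bdry (Finsupp.single s c)) := by
      rw [cone_single, bdry_zsmul, bdry_coneRaw x _ s.2, bdry_single, cone_zsmul, cone_simpBdry,
        smul_sub]
      congr 1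
      rw [sgl, dif_pos s.2]
      simp
    rw [cone_add, bdry_add, ih, bdry_add, cone_add, hsingle]
    abel

lemma znorm_eq_sum {n : ℕ} (M : ZChain n) {t : Finset (Simp n)} (h : M.support ⊆ t) :
    znorm M = ∑ s ∈ t, (M s).natAbs :=
  Finsupp.sum_of_support_subset M h _ (fun _ _ => rfl)

lemma znorm_zero {n : ℕ} : znorm (0 : ZChain n) = 0 := by simp [znorm]

lemma znorm_add_le {n : ℕ} (M N : ZChain n) : znorm (M + N) ≤ znorm M + znorm N := by
  rw [znorm_eq_sum (M+N) Finsupp.support_add,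
    znorm_eq_sum M Finset.subset_union_left, znorm_eq_sum N Finset.subset_union_right,
    ← Finset.sum_add_distrib]
  apply Finset.sum_le_sum
  intro i _
  rw [Finsupp.add_apply]
  exact Int.natAbs_add_le _ _

lemma znorm_sum_le {n : ℕ} {ι : Type} (t : Finset ι) (F : ι → ZChain n) :
    znorm (∑ i ∈ t, F i) ≤ ∑ i ∈ t, znorm (F i) := by
  induction t using Finset.induction with
  | empty => simp [znorm_zero]
  | insert a s hx ih =>
    rw [Finset.sum_insert hx, Finset.sum_insert hx]
    exact le_trans (znorm_add_le _ _) (by omega)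

lemma znorm_single {n : ℕ} (s : Simp n) (c : ℤ) : znorm (Finsupp.single s c) = c.natAbs := by
  rw [znorm, Finsupp.sum_single_index]
  simp

lemma znorm_smul_pushSimp {n : ℕ} (f : ℕ → ℕ) (s : Simp n) (c : ℤ) :
    znorm (c • pushSimp f s) = if Set.InjOn f (s : Finset ℕ) then c.natAbs else 0 := by
  by_cases hinj : Set.InjOn f (s : Finset ℕ)
  · rw [if_pos hinj]
    have hcard : ((s:Finset ℕ).image f).card = n + 1 := by
      rw [Finset.card_image_of_injOn hinj, s.2]
    show znorm (c • pushRaw f n (s:Finset ℕ)) = c.natAbs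
    rw [pushRaw, if_pos hinj, sgl, dif_pos hcard, smul_smul, Finsupp.smul_single, znorm_single]
    rcases eps_unit f (s:Finset ℕ) with he | he <;>
      simp [he, Int.natAbs_mul]
  · rw [if_neg hinj]
    show znorm (c • pushRaw f n (s:Finset ℕ)) = 0
    rw [pushRaw, if_neg hinj, smul_zero, znorm_zero]

lemma push_as_sum {n : ℕ} (f : ℕ → ℕ) (M : ZChain n) :
    push f M = ∑ s ∈ M.support, (M s) • pushSimp f s := rfl

lemma znorm_push_pair {n : ℕ} (f g : ℕ → ℕ) (M : ZChain n)
    (hfg : ∀ s ∈ M.support, ¬(Set.InjOn f (s:Finset ℕ) ∧ Set.InjOn g (s:Finset ℕ))) :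
    znorm (push f M) + znorm (push g M) ≤ znorm M := by
  have h1 : znorm (push f M) ≤ ∑ s ∈ M.support,
      (if Set.InjOn f (s:Finset ℕ) then (M s).natAbs else 0) := by
    rw [push_as_sum]
    refine le_trans (znorm_sum_le _ _) ?_
    apply Finset.sum_le_sum
    intro s _
    rw [znorm_smul_pushSimp]
  have h2 : znorm (push g M) ≤ ∑ s ∈ M.support,
      (if Set.InjOn g (s:Finset ℕ) then (M s).natAbs else 0) := by
    rw [push_as_sum]
    refine le_trans (znorm_sum_le _ _) ?_
    apply Finset.sum_le_sum
    intro s _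
    rw [znorm_smul_pushSimp]
  have h3 : znorm M = ∑ s ∈ M.support, (M s).natAbs := znorm_eq_sum M (le_refl _)
  rw [h3]
  refine le_trans (Nat.add_le_add h1 h2) ?_
  rw [← Finset.sum_add_distrib]
  apply Finset.sum_le_sum
  intro s hs
  have := hfg s hs
  split_ifs with h1' h2' <;> simp_all

lemma cycle_small {n : ℕ} (W : ZChain (n+1)) (C : Finset ℕ) (hC : C.card ≤ n + 2)
    (hsupp : ∀ s ∈ W.support, (s : Finset ℕ) ⊆ C) (hW : bdry W = 0) : W = 0 := by
  by_contra hne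
  obtain ⟨σ, hσ⟩ := Finsupp.support_nonempty_iff.2 hne
  have hσC : (σ : Finset ℕ) = C :=
    Finset.eq_of_subset_of_card_le (hsupp σ hσ) (by rw [σ.2]; exact hC)
  have hWs : W = Finsupp.single σ (W σ) := by
    ext t
    by_cases ht : t = σ
    · subst ht; simp
    · rw [Finsupp.single_apply, if_neg (fun h => ht h.symm)]
      by_contra hc
      have htsup : t ∈ W.support := Finsupp.mem_support_iff.2 (fun h => hc (by rw [h]))
      have : (t : Finset ℕ) = C :=
        Finset.eq_of_subset_of_card_le (hsupp t htsup) (by rw [t.2]; exact hC)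
      exact ht (Subtype.ext (this.trans hσC.symm))
  obtain ⟨a, ha⟩ : ((σ:Finset ℕ)).Nonempty := Finset.card_pos.1 (by rw [σ.2]; omega)
  have hbd : (0 : ZChain n) = (W σ) • simpBdry ℤ σ := by
    rw [← hW]
    conv_lhs => rw [hWs]
    exact bdry_single σ (W σ)
  have hτc : (((σ:Finset ℕ)).erase a).card = n+1 := by
    simp [Finset.card_erase_of_mem ha, σ.2]
  set τ : Simp n := ⟨((σ:Finset ℕ)).erase a, hτc⟩ with hτ
  have happ := congrArg (fun Z : ZChain n => Z τ) hbd
  simp only [Finsupp.coe_zero, Pi.zero_apply, Finsupp.smul_apply] at happ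
  have hval : (simpBdry ℤ σ) τ = (-1:ℤ) ^ (((σ:Finset ℕ).filter (· < a)).card) := by
    rw [simpBdry_expand]
    rw [Finsupp.finset_sum_apply]
    rw [Finset.sum_eq_single_of_mem a ha]
    · rw [Finsupp.smul_apply, sgl, dif_pos hτc]
      simp [hτ]
    · intro v hv hva
      rw [Finsupp.smul_apply, sgl, dif_pos (by simp [Finset.card_erase_of_mem hv, σ.2] :
        ((σ:Finset ℕ).erase v).card = n+1), Finsupp.single_apply, if_neg, smul_zero]
      intro hc
      have : (σ:Finset ℕ).erase v = (σ:Finset ℕ).erase a := congrArg Subtype.val hc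
      have hav : a ∈ (σ:Finset ℕ).erase v :=
        Finset.mem_erase.2 ⟨fun h => hva h.symm, ha⟩
      rw [this] at hav
      exact (Finset.notMem_erase a _) hav
  rw [hval] at happ
  have hzero : W σ = 0 := by
    rcases Nat.even_or_odd (((σ:Finset ℕ).filter (· < a)).card) with he | he
    · rw [he.neg_one_pow, smul_eq_mul, mul_one] at happ; exact happ.symm
    · rw [he.neg_one_pow, smul_eq_mul, mul_neg_one, eq_comm, neg_eq_zero] at happ; exact happ
  exact (Finsupp.mem_support_iff.1 hσ) hzero

end
noncomputable section

lemma zvol_le {n : ℕ} (X : ZChain n) (M : ZChain (n+1)) (h : bdry M = X) : zvol X ≤ znorm M :=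
  Nat.sInf_le ⟨M, h, rfl⟩

lemma zvol_zero {n : ℕ} : zvol (0 : ZChain n) = 0 :=
  Nat.eq_zero_of_le_zero (le_trans (zvol_le 0 0 bdry_zero) (le_of_eq znorm_zero))

lemma zvol_spec {n : ℕ} (X : ZChain (n+1)) (hX : bdry X = 0) :
    ∃ M : ZChain (n+1+1), bdry M = X ∧ znorm M = zvol X := by
  have hne : {m : ℕ | ∃ M : ZChain (n+1+1), bdry M = X ∧ znorm M = m}.Nonempty :=
    ⟨znorm (cone 0 X), cone 0 X, by rw [bdry_cone, hX, cone_zero, sub_zero], rfl⟩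
  obtain ⟨M, hM, hMn⟩ := Nat.sInf_mem hne
  exact ⟨M, hM, hMn⟩

lemma push_eq_self {n : ℕ} (f : ℕ → ℕ) (X : ZChain n)
    (hfix : ∀ s ∈ X.support, ∀ x ∈ (s : Finset ℕ), f x = x) :
    push f X = X := by
  rw [push_as_sum]
  conv_rhs => rw [← Finsupp.sum_single X]
  rw [Finsupp.sum]
  apply Finset.sum_congr rfl
  intro s hs
  have hid : ∀ x ∈ (s : Finset ℕ), f x = x := hfix s hs
  have hinj : Set.InjOn f (s : Finset ℕ) := by
    intro x hx y hy hxy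
    rwa [hid x (Finset.mem_coe.1 hx), hid y (Finset.mem_coe.1 hy)] at hxy
  have himg : (s : Finset ℕ).image f = (s : Finset ℕ) := by
    rw [Finset.image_congr (fun x hx => hid x hx)]
    exact Finset.image_id
  show (X s) • pushRaw f n (s : Finset ℕ) = Finsupp.single s (X s)
  rw [pushRaw, if_pos hinj, eps_id_on f _ hid, one_smul, himg, sgl, dif_pos s.2,
    Finsupp.smul_single, smul_eq_mul, mul_one]

lemma push_support {n : ℕ} (f : ℕ → ℕ) (M : ZChain n) (t : Simp n)
    (ht : t ∈ (push f M).support) :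
    ∃ s ∈ M.support, (t : Finset ℕ) = (s : Finset ℕ).image f := by
  have hval : (push f M) t ≠ 0 := Finsupp.mem_support_iff.1 ht
  rw [push_as_sum, Finsupp.finset_sum_apply] at hval
  obtain ⟨s, hs, hne⟩ := Finset.exists_ne_zero_of_sum_ne_zero hval
  refine ⟨s, hs, ?_⟩
  by_cases hinj : Set.InjOn f (s : Finset ℕ)
  · have hcard : ((s : Finset ℕ).image f).card = n + 1 := by
      rw [Finset.card_image_of_injOn hinj, s.2]
    have hval2 : ((M s) • pushSimp f s) t
        = Finsupp.single (⟨(s:Finset ℕ).image f, hcard⟩ : Simp n) (M s * eps f (s:Finset ℕ)) t := by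
      show ((M s) • pushRaw f n (s:Finset ℕ)) t = _
      rw [pushRaw, if_pos hinj, sgl, dif_pos hcard, smul_smul, Finsupp.smul_single, smul_eq_mul,
        mul_one]
    rw [hval2, Finsupp.single_apply] at hne
    split_ifs at hne with heq
    · rw [← heq]
    · exact absurd rfl hne
  · exfalso
    apply hne
    show ((M s) • pushRaw f n (s:Finset ℕ)) t = 0
    rw [pushRaw, if_neg hinj, smul_zero, Finsupp.coe_zero, Pi.zero_apply]

lemma card_le_of_double_inj {A B : Finset ℕ} {p q : ℕ} (hp : p ∈ A) (hq : q ∈ B)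
    (t : Finset ℕ)
    (hf : Set.InjOn (fun x => if x ∈ A then x else p) ↑t)
    (hg : Set.InjOn (fun x => if x ∈ B then x else q) ↑t) :
    t.card ≤ 2 + ((A ∩ B) \ {p, q}).card := by
  classical
  set t1 := t.filter (fun x => x ∉ A ∨ x = p) with ht1
  set t2 := t.filter (fun x => x ∉ B ∨ x = q) with ht2
  have h1 : t1.card ≤ 1 := by
    rw [Finset.card_le_one]
    intro x hx y hy
    obtain ⟨hxt, hxP⟩ := Finset.mem_filter.1 hx
    obtain ⟨hyt, hyP⟩ := Finset.mem_filter.1 hy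
    have hvx : (if x ∈ A then x else p) = p := by
      rcases hxP with hxA | rfl
      · rw [if_neg hxA]
      · exact ite_self x
    have hvy : (if y ∈ A then y else p) = p := by
      rcases hyP with hyA | rfl
      · rw [if_neg hyA]
      · exact ite_self y
    exact hf (Finset.mem_coe.2 hxt) (Finset.mem_coe.2 hyt) (hvx.trans hvy.symm)
  have h2 : t2.card ≤ 1 := by
    rw [Finset.card_le_one]
    intro x hx y hy
    obtain ⟨hxt, hxP⟩ := Finset.mem_filter.1 hx
    obtain ⟨hyt, hyP⟩ := Finset.mem_filter.1 hy
    have hvx : (if x ∈ B then x else q) = q := by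
      rcases hxP with hxB | rfl
      · rw [if_neg hxB]
      · exact ite_self x
    have hvy : (if y ∈ B then y else q) = q := by
      rcases hyP with hyB | rfl
      · rw [if_neg hyB]
      · exact ite_self y
    exact hg (Finset.mem_coe.2 hxt) (Finset.mem_coe.2 hyt) (hvx.trans hvy.symm)
  have hcover : t ⊆ t1 ∪ t2 ∪ ((A ∩ B) \ {p, q}) := by
    intro x hx
    simp only [ht1, ht2, Finset.mem_union, Finset.mem_filter, Finset.mem_sdiff,
      Finset.mem_inter, Finset.mem_insert, Finset.mem_singleton]
    by_cases hxA : x ∈ A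
    · by_cases hxB : x ∈ B
      · by_cases hxp : x = p
        · exact Or.inl (Or.inl ⟨hx, Or.inr hxp⟩)
        · by_cases hxq : x = q
          · exact Or.inl (Or.inr ⟨hx, Or.inr hxq⟩)
          · exact Or.inr ⟨⟨hxA, hxB⟩, by tauto⟩
      · exact Or.inl (Or.inr ⟨hx, Or.inl hxB⟩)
    · exact Or.inl (Or.inl ⟨hx, Or.inl hxA⟩)
  calc t.card ≤ (t1 ∪ t2 ∪ ((A ∩ B) \ {p, q})).card := Finset.card_le_card hcover
    _ ≤ (t1 ∪ t2).card + ((A ∩ B) \ {p, q}).card := Finset.card_union_le _ _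
    _ ≤ t1.card + t2.card + ((A ∩ B) \ {p, q}).card := by
        have := Finset.card_union_le t1 t2
        omega
    _ ≤ 2 + ((A ∩ B) \ {p, q}).card := by omega

end
/-- `Zvol` is additive under almost disjoint union. -/
theorem zvol_add_of_almost_disjoint {n : ℕ} (A B : Finset ℕ)
    (h : (A ∩ B).card ≤ n + 2)
    (X Y : ZChain (n + 1)) (hXc : bdry X = 0) (hYc : bdry Y = 0)
    (hX : suppOn A X) (hY : suppOn B Y) :
    zvol (X + Y) = zvol X + zvol Y := by
  classical
  by_cases hA : A = ∅
  · have hX0 : X = 0 := by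
      rw [← Finsupp.support_eq_empty, Finset.eq_empty_iff_forall_notMem]
      intro s hs
      have h1 := hX s hs
      rw [hA, Finset.subset_empty] at h1
      have h2 := s.2
      rw [h1] at h2
      simp at h2
    rw [hX0, zero_add, zvol_zero, zero_add]
  by_cases hB : B = ∅
  · have hY0 : Y = 0 := by
      rw [← Finsupp.support_eq_empty, Finset.eq_empty_iff_forall_notMem]
      intro s hs
      have h1 := hY s hs
      rw [hB, Finset.subset_empty] at h1
      have h2 := s.2
      rw [h1] at h2
      simp at h2
    rw [hY0, add_zero, zvol_zero, add_zero]
  obtain ⟨p, q, hpA, hqB, hCp, hCq, hpq⟩ : ∃ p q, p ∈ A ∧ q ∈ B ∧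
      ((A ∩ B) ∪ {p}).card ≤ n + 2 ∧ ((A ∩ B) ∪ {q}).card ≤ n + 2 ∧
      ((A ∩ B) \ {p, q}).card ≤ n := by
    rcases Nat.lt_or_ge (A ∩ B).card 2 with hlt | hge
    · rcases Nat.lt_or_ge (A ∩ B).card 1 with h0 | h1
      · have hAB : A ∩ B = ∅ := Finset.card_eq_zero.1 (by omega)
        obtain ⟨p, hp⟩ := Finset.nonempty_iff_ne_empty.2 hA
        obtain ⟨q, hq⟩ := Finset.nonempty_iff_ne_empty.2 hB
        exact ⟨p, q, hp, hq, by simp [hAB], by simp [hAB], by simp [hAB]⟩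
      · have hone : (A ∩ B).card = 1 := by omega
        obtain ⟨p, hp'⟩ := Finset.card_eq_one.1 hone
        have hpAB : p ∈ A ∩ B := by rw [hp']; exact Finset.mem_singleton_self p
        refine ⟨p, p, (Finset.mem_inter.1 hpAB).1, (Finset.mem_inter.1 hpAB).2, ?_, ?_, ?_⟩ <;>
          simp [hp']
    · obtain ⟨p, hp, q, hq, hne⟩ := Finset.one_lt_card.1 hge
      have hsub : ({p, q} : Finset ℕ) ⊆ A ∩ B := by
        simp [Finset.insert_subset_iff, hp, hq]
      have hu1 : (A ∩ B) ∪ {p} = A ∩ B := Finset.union_eq_left.2 (by simp [hp])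
      have hu2 : (A ∩ B) ∪ {q} = A ∩ B := Finset.union_eq_left.2 (by simp [hq])
      have hcd : ((A ∩ B) \ {p, q}).card = (A ∩ B).card - 2 := by
        rw [Finset.card_sdiff_of_subset hsub, Finset.card_pair hne]
      exact ⟨p, q, (Finset.mem_inter.1 hp).1, (Finset.mem_inter.1 hq).2,
        by rw [hu1]; exact h, by rw [hu2]; exact h, by omega⟩
  set f : ℕ → ℕ := fun x => if x ∈ A then x else p with hfdef
  set g : ℕ → ℕ := fun x => if x ∈ B then x else q with hgdef
  have hfX : push f X = X := push_eq_self f X (fun s hs x hx => if_pos (hX s hs hx))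
  have hgY : push g Y = Y := push_eq_self g Y (fun s hs x hx => if_pos (hY s hs hx))
  have hfY : push f Y = 0 := by
    apply cycle_small (push f Y) ((A ∩ B) ∪ {p}) hCp
    · intro t ht
      obtain ⟨s, hs, hteq⟩ := push_support f Y t ht
      rw [hteq]
      intro z hz
      obtain ⟨x, hx, rfl⟩ := Finset.mem_image.1 hz
      have hxB : x ∈ B := hY s hs hx
      by_cases hxA : x ∈ A
      · show (if x ∈ A then x else p) ∈ _
        rw [if_pos hxA]
        exact Finset.mem_union_left _ (Finset.mem_inter.2 ⟨hxA, hxB⟩)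
      · show (if x ∈ A then x else p) ∈ _
        rw [if_neg hxA]
        exact Finset.mem_union_right _ (Finset.mem_singleton_self p)
    · rw [bdry_push, hYc, map_zero]
  have hgX : push g X = 0 := by
    apply cycle_small (push g X) ((A ∩ B) ∪ {q}) hCq
    · intro t ht
      obtain ⟨s, hs, hteq⟩ := push_support g X t ht
      rw [hteq]
      intro z hz
      obtain ⟨x, hx, rfl⟩ := Finset.mem_image.1 hz
      have hxA : x ∈ A := hX s hs hx
      by_cases hxB : x ∈ B
      · show (if x ∈ B then x else q) ∈ _
        rw [if_pos hxB]
        exact Finset.mem_union_left _ (Finset.mem_inter.2 ⟨hxA, hxB⟩)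
      · show (if x ∈ B then x else q) ∈ _
        rw [if_neg hxB]
        exact Finset.mem_union_right _ (Finset.mem_singleton_self q)
    · rw [bdry_push, hXc, map_zero]
  have hXYc : bdry (X + Y) = 0 := by rw [bdry_add, hXc, hYc, add_zero]
  obtain ⟨M, hM, hMn⟩ := zvol_spec (X + Y) hXYc
  have hfM : bdry (push f M) = X := by rw [bdry_push, hM, map_add, hfX, hfY, add_zero]
  have hgM : bdry (push g M) = Y := by rw [bdry_push, hM, map_add, hgX, hgY, zero_add]
  have hcount : ∀ s ∈ M.support, ¬(Set.InjOn f (s:Finset ℕ) ∧ Set.InjOn g (s:Finset ℕ)) := by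
    rintro s _ ⟨h1, h2⟩
    have hb := card_le_of_double_inj hpA hqB (s : Finset ℕ) h1 h2
    have hc := s.2
    omega
  have hlow : zvol X + zvol Y ≤ zvol (X + Y) := by
    calc zvol X + zvol Y ≤ znorm (push f M) + znorm (push g M) :=
          Nat.add_le_add (zvol_le X _ hfM) (zvol_le Y _ hgM)
      _ ≤ znorm M := znorm_push_pair f g M hcount
      _ = zvol (X + Y) := hMn
  have hup : zvol (X + Y) ≤ zvol X + zvol Y := by
    obtain ⟨MX, hMX, hMXn⟩ := zvol_spec X hXc
    obtain ⟨MY, hMY, hMYn⟩ := zvol_spec Y hYc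
    calc zvol (X + Y) ≤ znorm (MX + MY) := zvol_le _ _ (by rw [bdry_add, hMX, hMY])
      _ ≤ znorm MX + znorm MY := znorm_add_le _ _
      _ = zvol X + zvol Y := by rw [hMXn, hMYn]
  omega
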